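/- arXiv:2108.09115 — 3 statements merged into one kernel-verified Lean document; each statement's English description precedes it below -/
import Mathlib

section
/- For any strings A, B of length n over Σ and any monotone mapping μ from the windows of A to the windows of B (or ⊥), the window cost ED(μ) is an upper bound on the true edit distance: ED(μ) ≥ ED(A,B). -/
/-- Costs of edit operations (formerly `Levenshtein.Cost` in Mathlib). -/
structure Levenshtein.Cost (α β δ : Type*) where
  delete : α → δ
  insert : β → δ
  substitute : α → β → δ

/-- Unit costs (formerly `Levenshtein.defaultCost` in Mathlib). -/
def Levenshtein.defaultCost {α : Type*} [DecidableEq α] : Levenshtein.Cost α α ℕ where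
  delete _ := 1
  insert _ := 1
  substitute a b := if a = b then 0 else 1

/-- Levenshtein distance (formerly `levenshtein` in Mathlib), by its defining recursion. -/
def levenshtein {α β δ : Type*} [AddZeroClass δ] [Min δ] (C : Levenshtein.Cost α β δ) :
    List α → List β → δ
  | [], [] => 0
  | [], y :: ys => C.insert y + levenshtein C [] ys
  | x :: xs, [] => C.delete x + levenshtein C xs []
  | x :: xs, y :: ys =>
    min (C.delete x + levenshtein C xs (y :: ys))
      (min (C.insert y + levenshtein C (x :: xs) ys) (C.substitute x y + levenshtein C xs ys))

/-- Levenshtein edit distance with unit costs. -/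
def ED {α : Type*} [DecidableEq α] (x y : List α) : ℕ :=
  levenshtein Levenshtein.defaultCost x y

/-- The window of `B` with start index `s` (0-indexed) and length `l`. -/
def window {α : Type*} (B : List α) (s l : ℕ) : List α := (B.drop s).take l

@[simp] theorem levenshtein_nil_nil {α β δ : Type*} [AddZeroClass δ] [Min δ]
    (C : Levenshtein.Cost α β δ) : levenshtein C [] [] = 0 := by rw [levenshtein]

@[simp] theorem levenshtein_nil_cons {α β δ : Type*} [AddZeroClass δ] [Min δ]
    (C : Levenshtein.Cost α β δ) (y : β) (ys : List β) :
    levenshtein C [] (y :: ys) = C.insert y + levenshtein C [] ys := by rw [levenshtein]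

@[simp] theorem levenshtein_cons_nil {α β δ : Type*} [AddZeroClass δ] [Min δ]
    (C : Levenshtein.Cost α β δ) (x : α) (xs : List α) :
    levenshtein C (x :: xs) [] = C.delete x + levenshtein C xs [] := by rw [levenshtein]

@[simp] theorem levenshtein_cons_cons {α β δ : Type*} [AddZeroClass δ] [Min δ]
    (C : Levenshtein.Cost α β δ) (x : α) (xs : List α) (y : β) (ys : List β) :
    levenshtein C (x :: xs) (y :: ys) =
      min (C.delete x + levenshtein C xs (y :: ys))
        (min (C.insert y + levenshtein C (x :: xs) ys) (C.substitute x y + levenshtein C xs ys)) := by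
  rw [levenshtein]

@[simp] theorem Levenshtein.defaultCost_delete {α : Type*} [DecidableEq α] (a : α) :
    (Levenshtein.defaultCost : Levenshtein.Cost α α ℕ).delete a = 1 := rfl

@[simp] theorem Levenshtein.defaultCost_insert {α : Type*} [DecidableEq α] (a : α) :
    (Levenshtein.defaultCost : Levenshtein.Cost α α ℕ).insert a = 1 := rfl

@[simp] theorem Levenshtein.defaultCost_substitute {α : Type*} [DecidableEq α] (a b : α) :
    (Levenshtein.defaultCost : Levenshtein.Cost α α ℕ).substitute a b = if a = b then 0 else 1 := rfl

def List.enumFrom {α : Type*} : ℕ → List α → List (ℕ × α)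
  | _, [] => []
  | n, x :: xs => (n, x) :: List.enumFrom (n + 1) xs

def List.enum {α : Type*} (l : List α) : List (ℕ × α) := List.enumFrom 0 l

theorem List.enumFrom_cons {α : Type*} (x : α) (xs : List α) (n : ℕ) :
    (x :: xs).enumFrom n = (n, x) :: xs.enumFrom (n + 1) := rfl

@[simp] theorem List.enumFrom_nil {α : Type*} (n : ℕ) : ([] : List α).enumFrom n = [] := rfl

@[simp] theorem List.length_enumFrom {α : Type*} : ∀ (n : ℕ) (l : List α),
    (l.enumFrom n).length = l.length
  | _, [] => rfl
  | n, _ :: xs => by simp [List.enumFrom_cons, List.length_enumFrom (n + 1) xs]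

theorem List.enumFrom_map_snd {α : Type*} : ∀ (n : ℕ) (l : List α),
    (l.enumFrom n).map Prod.snd = l
  | _, [] => rfl
  | n, _ :: xs => by simp [List.enumFrom_cons, List.enumFrom_map_snd (n + 1) xs]

theorem List.enumFrom_map_fst {α : Type*} : ∀ (n : ℕ) (l : List α),
    (l.enumFrom n).map Prod.fst = List.range' n l.length
  | _, [] => rfl
  | n, _ :: xs => by
    simp [List.enumFrom_cons, List.enumFrom_map_fst (n + 1) xs, List.range'_succ]

theorem List.enum_map_snd {α : Type*} (l : List α) : l.enum.map Prod.snd = l :=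
  List.enumFrom_map_snd 0 l

theorem List.enum_map_fst {α : Type*} (l : List α) : l.enum.map Prod.fst = List.range l.length := by
  rw [List.enum, List.enumFrom_map_fst, List.range_eq_range']

theorem List.getElem_enumFrom {α : Type*} : ∀ (n : ℕ) (l : List α) (i : ℕ)
    (h : i < (l.enumFrom n).length),
    (l.enumFrom n)[i] = (n + i, l[i]'(by rwa [List.length_enumFrom] at h))
  | _, [], i, h => by simp at h
  | n, x :: xs, 0, h => by simp [List.enumFrom_cons]
  | n, x :: xs, i + 1, h => by
    simp only [List.enumFrom_cons, List.getElem_cons_succ]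
    rw [List.getElem_enumFrom (n + 1) xs i]
    simp only [Prod.mk.injEq, and_true]
    omega

theorem List.getElem_enum {α : Type*} (l : List α) (i : ℕ) (h : i < l.enum.length) :
    l.enum[i] = (i, l[i]'(by rwa [List.enum, List.length_enumFrom] at h)) := by
  simp [List.enum, List.getElem_enumFrom]

namespace EDaux
variable {α : Type*} [DecidableEq α]

theorem ED_nil_right (x : List α) : ED x [] = x.length := by
  induction x with
  | nil => simp [ED]
  | cons a x ih => simp only [ED, levenshtein_cons_nil] at ih ⊢; simp [ih]; omega

theorem ED_nil_left (y : List α) : ED ([] : List α) y = y.length := by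
  induction y with
  | nil => simp [ED]
  | cons a y ih => simp only [ED, levenshtein_nil_cons] at ih ⊢; simp [ih]; omega

theorem ED_cons_cons (a b : α) (x y : List α) :
    ED (a :: x) (b :: y) =
      min (1 + ED x (b :: y)) (min (1 + ED (a :: x) y) ((if a = b then 0 else 1) + ED x y)) := by
  simp [ED]

theorem ED_cons_left_le (a : α) (x y : List α) : ED (a :: x) y ≤ 1 + ED x y := by
  cases y with
  | nil => simp [ED_nil_right]
  | cons b y => rw [ED_cons_cons]; omega

theorem ED_cons_right_le (b : α) (x y : List α) : ED x (b :: y) ≤ 1 + ED x y := by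
  cases x with
  | nil => simp [ED_nil_left]
  | cons a x => rw [ED_cons_cons]; omega

theorem ED_sub_le (a b : α) (x y : List α) :
    ED (a :: x) (b :: y) ≤ (if a = b then 0 else 1) + ED x y := by
  rw [ED_cons_cons]; omega

theorem length_le_add_ED : ∀ (y z : List α), z.length ≤ y.length + ED y z
  | [], z => by simp [ED_nil_left]
  | a :: y, [] => by simp
  | a :: y, c :: z => by
    have h1 := length_le_add_ED y (c :: z)
    have h2 := length_le_add_ED (a :: y) z
    have h3 := length_le_add_ED y z
    rw [ED_cons_cons]
    simp only [List.length_cons] at *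
    omega
  termination_by y z => y.length + z.length

theorem length_le_add_ED' : ∀ (y z : List α), y.length ≤ z.length + ED y z
  | [], z => by simp
  | a :: y, [] => by simp [ED_nil_right]
  | a :: y, c :: z => by
    have h1 := length_le_add_ED' y (c :: z)
    have h2 := length_le_add_ED' (a :: y) z
    have h3 := length_le_add_ED' y z
    rw [ED_cons_cons]
    simp only [List.length_cons] at *
    omega
  termination_by y z => y.length + z.length

theorem ED_le_length_add : ∀ (y z : List α), ED y z ≤ y.length + z.length
  | [], z => by simp [ED_nil_left]
  | a :: y, [] => by simp [ED_nil_right]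
  | a :: y, c :: z => by
    have h3 := ED_le_length_add y z
    have h := ED_sub_le a c y z
    simp only [List.length_cons] at *
    have hc : (if a = c then 0 else 1) ≤ 1 := by split <;> omega
    omega
  termination_by y z => y.length + z.length

end EDaux

namespace EDaux
variable {α : Type*} [DecidableEq α]

theorem ED_triangle : ∀ (x y z : List α), ED x z ≤ ED x y + ED y z
  | [], y, z => by
      rw [ED_nil_left]
      have := length_le_add_ED y z
      rw [ED_nil_left]
      omega
  | x, y, [] => by
      rw [ED_nil_right, ED_nil_right]
      have := length_le_add_ED' x y
      omega
  | a :: x, [], c :: z => by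
      have := ED_le_length_add (a :: x) (c :: z)
      rw [ED_nil_right, ED_nil_left]
      simp only [List.length_cons] at *
      omega
  | a :: x, b :: y, c :: z => by
      have h1 := ED_cons_left_le a x (c :: z)
      have h2 := ED_cons_right_le c (a :: x) z
      have h3 := ED_sub_le a c x z
      have e1 := ED_cons_cons a b x y
      have e2 := ED_cons_cons b c y z
      have i1 := ED_triangle x (b :: y) (c :: z)
      have i2 := ED_triangle (a :: x) y (c :: z)
      have i3 := ED_triangle (a :: x) (b :: y) z
      have i4 := ED_triangle (a :: x) y z
      have i5 := ED_triangle x y (c :: z)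
      have i6 := ED_triangle x y z
      have hc : (if a = c then (0:ℕ) else 1) ≤ (if a = b then 0 else 1) + (if b = c then 0 else 1) := by
        by_cases hab : a = b <;> by_cases hbc : b = c <;> simp [hab, hbc] <;> split <;> omega
      omega
  termination_by x y z => x.length + y.length + z.length
  decreasing_by all_goals (simp only [List.length_cons]; omega)

theorem ED_append_le : ∀ (x₁ y₁ x₂ y₂ : List α),
    ED (x₁ ++ x₂) (y₁ ++ y₂) ≤ ED x₁ y₁ + ED x₂ y₂
  | [], [], x₂, y₂ => by simp [ED_nil_left, ED]
  | [], b :: y₁, x₂, y₂ => by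
      have ih := ED_append_le [] y₁ x₂ y₂
      have h := ED_cons_right_le b x₂ (y₁ ++ y₂)
      rw [ED_nil_left] at *
      simp only [List.nil_append, List.cons_append, List.length_cons] at *
      omega
  | a :: x₁, y₁, x₂, y₂ => by
      cases y₁ with
      | nil =>
        have ih := ED_append_le x₁ [] x₂ y₂
        have h := ED_cons_left_le a (x₁ ++ x₂) y₂
        rw [ED_nil_right] at *
        simp only [List.nil_append, List.cons_append, List.length_cons] at *
        omega
      | cons b y₁ =>
        have ih1 := ED_append_le x₁ (b :: y₁) x₂ y₂
        have ih2 := ED_append_le (a :: x₁) y₁ x₂ y₂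
        have ih3 := ED_append_le x₁ y₁ x₂ y₂
        have e := ED_cons_cons a b x₁ y₁
        have g1 := ED_cons_left_le a (x₁ ++ x₂) (b :: y₁ ++ y₂)
        have g2 := ED_cons_right_le b (a :: x₁ ++ x₂) (y₁ ++ y₂)
        have g3 := ED_sub_le a b (x₁ ++ x₂) (y₁ ++ y₂)
        simp only [List.cons_append] at *
        omega
  termination_by x₁ y₁ _ _ => x₁.length + y₁.length

theorem ED_of_sublist {z y : List α} (h : z.Sublist y) : ED y z + z.length ≤ y.length := by
  induction h with
  | slnil => simp [ED]
  | @cons l₁ l₂ a h ih =>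
    have hd := ED_cons_left_le a l₂ l₁
    simp only [List.length_cons]; omega
  | @cons_cons l₁ l₂ a h ih =>
    have hs := ED_sub_le a a l₂ l₁
    simp only [if_pos rfl, List.length_cons] at hs ⊢
    simp at hs
    omega

theorem ED_of_sublist' {z y : List α} (h : z.Sublist y) : ED z y + z.length ≤ y.length := by
  induction h with
  | slnil => simp [ED]
  | @cons l₁ l₂ a h ih =>
    have hd := ED_cons_right_le a l₁ l₂
    simp only [List.length_cons]; omega
  | @cons_cons l₁ l₂ a h ih =>
    have hs := ED_sub_le a a l₁ l₂
    simp only [if_pos rfl, List.length_cons] at hs ⊢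
    simp at hs
    omega

end EDaux

namespace EDaux
variable {α : Type*} {β : Type*} {ι : Type*}

theorem le_fst_of_mem_enumFrom' : ∀ {B : List α} {k : ℕ} {x : ℕ × α},
    x ∈ B.enumFrom k → k ≤ x.1
  | b :: B, k, x, h => by
    rw [List.enumFrom_cons] at h
    rcases List.mem_cons.1 h with rfl | h
    · exact le_refl _
    · exact le_trans (Nat.le_succ k) (le_fst_of_mem_enumFrom' h)

theorem enumFrom_filter_interval : ∀ (B : List α) (k s l : ℕ),
    ((B.enumFrom k).filter (fun x => decide (s + k ≤ x.1 ∧ x.1 < s + l + k))).map Prod.snd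
      = (B.drop s).take l
  | [], k, s, l => by simp
  | b :: B, k, 0, 0 => by
    rw [List.filter_eq_nil_iff.2]
    · simp
    · intro x hx
      simp only [decide_eq_true_eq]
      omega
  | b :: B, k, 0, l + 1 => by
    rw [List.enumFrom_cons]
    simp only [List.filter_cons]
    rw [if_pos (by simp only [decide_eq_true_eq]; omega)]
    have h2 : ((B.enumFrom (k+1)).filter (fun x => decide (0 + k ≤ x.1 ∧ x.1 < 0 + (l+1) + k)))
        = ((B.enumFrom (k+1)).filter (fun x => decide (0 + (k+1) ≤ x.1 ∧ x.1 < 0 + l + (k+1)))) := by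
      apply List.filter_congr
      intro x hx
      have := le_fst_of_mem_enumFrom' hx
      simp only [decide_eq_decide]
      omega
    rw [List.map_cons, h2, enumFrom_filter_interval B (k+1) 0 l]
    simp
  | b :: B, k, s + 1, l => by
    rw [List.enumFrom_cons]
    simp only [List.filter_cons]
    rw [if_neg (by simp only [decide_eq_true_eq]; omega)]
    have h2 : ((B.enumFrom (k+1)).filter (fun x => decide (s + 1 + k ≤ x.1 ∧ x.1 < s + 1 + l + k)))
        = ((B.enumFrom (k+1)).filter (fun x => decide (s + (k+1) ≤ x.1 ∧ x.1 < s + l + (k+1)))) := by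
      apply List.filter_congr
      intro x hx
      simp only [decide_eq_decide]
      omega
    rw [h2, enumFrom_filter_interval B (k+1) s l]
    simp

theorem enum_filter_interval (B : List α) (s l : ℕ) :
    (B.enum.filter (fun x => decide (s ≤ x.1 ∧ x.1 < s + l))).map Prod.snd
      = (B.drop s).take l := by
  have := enumFrom_filter_interval B 0 s l
  simpa [List.enum] using this

theorem filter_or_split (p q : β → Bool) : ∀ (l : List β),
    l.Pairwise (fun x y => ¬(q x = true ∧ p y = true)) → (∀ x, ¬(p x = true ∧ q x = true)) →
    l.filter (fun x => p x || q x) = l.filter p ++ l.filter q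
  | [], _, _ => by simp
  | a :: l, hp, hd => by
    rw [List.pairwise_cons] at hp
    obtain ⟨ha, hp⟩ := hp
    have ih := filter_or_split p q l hp hd
    simp only [List.filter_cons]
    by_cases h1 : p a = true
    · have hqa : ¬ q a = true := fun h => hd a ⟨h1, h⟩
      rw [if_pos (by simp [h1]), if_pos h1, if_neg hqa, ih, List.cons_append]
    · by_cases h2 : q a = true
      · rw [if_pos (by simp [h2]), if_neg (by simp [h1]), if_pos h2, ih]
        have hnil : l.filter p = [] := by
          apply List.filter_eq_nil_iff.2
          intro x hx hpx
          exact ha x hx ⟨h2, hpx⟩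
        rw [hnil]
        simp
      · rw [if_neg (by simp [h1, h2]), if_neg (by simp [h1]), if_neg (by simp [h2]), ih]

end EDaux

namespace EDaux

def window' {α : Type*} (B : List α) (s l : ℕ) : List α := (B.drop s).take l

def covb (L : List (ℕ × ℕ)) (i : ℕ) : Bool := L.any fun p => decide (p.1 ≤ i ∧ i < p.1 + p.2)

theorem enum_pairwise (B : List α) : B.enum.Pairwise (fun x y => x.1 < y.1) := by
  rw [List.pairwise_iff_getElem]
  intro i j hi hj hij
  rw [List.getElem_enum, List.getElem_enum]
  exact hij

theorem sel (B : List α) : ∀ (L : List (ℕ × ℕ)),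
    L.Pairwise (fun p q => p.1 ≤ q.1 ∧ p.1 + p.2 ≤ q.1 + q.2) →
    ((B.enum.filter fun x => covb L x.1).map Prod.snd).Sublist
      ((L.map fun p => window' B p.1 p.2).flatten)
  | [], _ => by simp [covb]
  | q :: L, hmono => by
    rw [List.pairwise_cons] at hmono
    obtain ⟨hq, hmono⟩ := hmono
    have ih := sel B L hmono
    set p₁ : ℕ × α → Bool := fun x => decide (q.1 ≤ x.1 ∧ x.1 < q.1 + q.2) && !covb L x.1 with hp₁
    set p₂ : ℕ × α → Bool := fun x => covb L x.1 with hp₂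
    -- order fact
    have horder : ∀ (i j : ℕ), (decide (q.1 ≤ i ∧ i < q.1 + q.2) && !covb L i) = true →
        covb L j = true → i < j := by
      intro i j h1 h2
      rw [Bool.and_eq_true, decide_eq_true_eq, Bool.not_eq_true'] at h1
      obtain ⟨⟨hi1, hi2⟩, hncov⟩ := h1
      rw [covb, List.any_eq_true] at h2
      obtain ⟨r, hrL, hr⟩ := h2
      rw [decide_eq_true_eq] at hr
      obtain ⟨hmq1, hmq2⟩ := hq r hrL
      by_contra hcon
      push_neg at hcon
      have : covb L i = true := by
        rw [covb, List.any_eq_true]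
        exact ⟨r, hrL, by rw [decide_eq_true_eq]; omega⟩
      rw [this] at hncov
      simp at hncov
    have hsplit : B.enum.filter (fun x => covb (q :: L) x.1)
        = B.enum.filter p₁ ++ B.enum.filter p₂ := by
      have hcong : B.enum.filter (fun x => covb (q :: L) x.1)
          = B.enum.filter (fun x => p₁ x || p₂ x) := by
        apply List.filter_congr
        intro x _
        rw [hp₁, hp₂]
        simp only [covb, List.any_cons]
        cases h : (L.any fun p => decide (p.1 ≤ x.1 ∧ x.1 < p.1 + p.2)) <;> simp [h, covb]
      rw [hcong]
      apply filter_or_split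
      · apply (enum_pairwise B).imp
        intro x y hxy hcon
        exact absurd (horder y.1 x.1 hcon.2 hcon.1) (by omega)
      · intro x hcon
        obtain ⟨h1, h2⟩ := hcon
        rw [hp₁, Bool.and_eq_true, Bool.not_eq_true'] at h1
        exact absurd (show covb L x.1 = true from h2) (by simp [h1.2])
    rw [hsplit, List.map_append, List.map_cons, List.flatten_cons]
    apply List.Sublist.append
    · have hsub : (B.enum.filter p₁).Sublist
          (B.enum.filter (fun x => decide (q.1 ≤ x.1 ∧ x.1 < q.1 + q.2))) := by
        apply List.monotone_filter_right
        intro x hx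
        rw [hp₁, Bool.and_eq_true] at hx
        exact hx.1
      have := List.Sublist.map Prod.snd hsub
      rw [enum_filter_interval B q.1 q.2] at this
      exact this
    · exact ih

end EDaux

namespace EDaux
variable {α : Type*} {β : Type*} {ι : Type*}

theorem sum_indicator_interval (n s l : ℕ) (h : s + l ≤ n) :
    (∑ i ∈ Finset.range n, if s ≤ i ∧ i < s + l then (1:ℕ) else 0) = l := by
  rw [← Finset.card_filter]
  have : (Finset.range n).filter (fun i => s ≤ i ∧ i < s + l) = Finset.Ico s (s + l) := by
    ext i
    simp only [Finset.mem_filter, Finset.mem_range, Finset.mem_Ico]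
    omega
  rw [this, Nat.card_Ico]
  omega

theorem sum_countP_intervals (n : ℕ) : ∀ (L : List (ℕ × ℕ)), (∀ p ∈ L, p.1 + p.2 ≤ n) →
    (∑ i ∈ Finset.range n, L.countP (fun p => decide (p.1 ≤ i ∧ i < p.1 + p.2)))
      = (L.map Prod.snd).sum
  | [], _ => by simp
  | q :: L, hw => by
    have ih := sum_countP_intervals n L (fun p hp => hw p (List.mem_cons_of_mem q hp))
    simp only [List.countP_cons, List.map_cons, List.sum_cons, decide_eq_true_eq]
    rw [Finset.sum_add_distrib, ih, sum_indicator_interval n q.1 q.2 (hw q List.mem_cons_self)]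
    omega

theorem countP_eq_sum_map (p : β → Bool) : ∀ (l : List β),
    l.countP p = (l.map fun x => if p x = true then (1:ℕ) else 0).sum
  | [] => by simp
  | a :: l => by
    rw [List.countP_cons, List.map_cons, List.sum_cons, countP_eq_sum_map p l]
    omega

theorem length_filter_range_eq_card (p : ℕ → Bool) : ∀ (n : ℕ),
    ((List.range n).filter p).length = ((Finset.range n).filter (fun i => p i = true)).card
  | 0 => by simp
  | n + 1 => by
    rw [List.range_succ, List.filter_append, List.length_append, Finset.range_add_one,
      Finset.filter_insert, length_filter_range_eq_card p n]
    by_cases h : p n = true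
    · rw [if_pos h, Finset.card_insert_of_notMem (by simp)]
      simp [h]
    · rw [if_neg h]
      simp [h]

theorem flatten_filterMap_map (f : ι → Option β) (g : β → List α) : ∀ (l : List ι),
    ((l.filterMap f).map g).flatten = (l.map fun j => (f j).elim [] g).flatten
  | [] => by simp
  | a :: l => by
    cases h : f a <;>
      simp [List.filterMap_cons, h, flatten_filterMap_map f g l]

end EDaux


namespace EDaux
variable {α : Type*} {β : Type*} {ι : Type*} [DecidableEq α]

theorem ED_flatten_le (f g : ι → List α) : ∀ (l : List ι),
    ED ((l.map f).flatten) ((l.map g).flatten) ≤ (l.map fun i => ED (f i) (g i)).sum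
  | [] => by simp [ED]
  | a :: l => by
    have ih := ED_flatten_le f g l
    have h := ED_append_le (f a) (g a) ((l.map f).flatten) ((l.map g).flatten)
    simp only [List.map_cons, List.flatten_cons, List.sum_cons]
    omega

end EDaux

open EDaux

/-- For strings `A, B`, a partition of `A` into an ordered list of
contiguous windows `𝒜` (so `𝒜.flatten = A`), and a monotone mapping `μ` from
`𝒜`-windows to windows of `B` (given as start/length pairs) or `⊥ = none`,
the window cost
`ED(μ) = Σ_a ED(a, μ(a)) + Σ_{i<|B|} |#{a : i ∈ μ(a)} − 1|`
(with `ED(a,⊥) = |a|`, the window width) is an upper bound on the true edit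
distance: `ED(μ) ≥ ED(A,B)`. -/
theorem stmt_8 {α : Type*} [DecidableEq α] (A B : List α)
    (𝒜 : List (List α)) (h𝒜 : 𝒜.flatten = A)
    (μ : Fin 𝒜.length → Option (ℕ × ℕ))
    (hwin : ∀ (i : Fin 𝒜.length) (s l : ℕ), μ i = some (s, l) → s + l ≤ B.length)
    (hmono : ∀ i j : Fin 𝒜.length, i ≤ j →
      ∀ s l s' l', μ i = some (s, l) → μ j = some (s', l') →
        s ≤ s' ∧ s + l ≤ s' + l') :
    (ED A B : ℤ) ≤
      (∑ i : Fin 𝒜.length,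
        (Option.elim (μ i) ((𝒜.get i).length : ℤ)
          (fun p => (ED (𝒜.get i) (window B p.1 p.2) : ℤ)))) +
      ∑ i ∈ Finset.range B.length,
        |((Finset.univ.filter (fun j : Fin 𝒜.length =>
            (Option.elim (μ j) false
              (fun p => decide (p.1 ≤ i ∧ i < p.1 + p.2))) = true)).card : ℤ) - 1| := by
  classical
  set L : List (ℕ × ℕ) := (List.finRange 𝒜.length).filterMap μ with hL
  have hwinL : ∀ p ∈ L, p.1 + p.2 ≤ B.length := by
    intro p hp
    rw [hL, List.mem_filterMap] at hp
    obtain ⟨j, -, hj⟩ := hp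
    exact hwin j p.1 p.2 (by rw [hj])
  have hmonoL : L.Pairwise (fun p q => p.1 ≤ q.1 ∧ p.1 + p.2 ≤ q.1 + q.2) := by
    rw [hL, List.pairwise_filterMap]
    apply (List.pairwise_lt_finRange 𝒜.length).imp
    intro i j hij p hp p' hp'
    obtain ⟨s, l⟩ := p
    obtain ⟨s', l'⟩ := p'
    exact hmono i j (le_of_lt hij) s l s' l' (Option.mem_def.mp hp) (Option.mem_def.mp hp')
  -- B' : concatenation of the windows
  set B' : List α := (L.map fun p => window' B p.1 p.2).flatten with hB'
  -- the common subsequence z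
  set z : List α := (B.enum.filter fun x => covb L x.1).map Prod.snd with hz
  set k : ℕ := z.length with hk
  set W : ℕ := (L.map Prod.snd).sum with hW
  have hzB' : z.Sublist B' := sel B L hmonoL
  have hzB : z.Sublist B := by
    have := List.Sublist.map Prod.snd (List.filter_sublist (p := fun x => covb L x.1) (l := B.enum))
    rwa [List.enum_map_snd] at this
  -- length of B'
  have hB'len : B'.length = W := by
    rw [hB', List.length_flatten, List.map_map, hW]
    congr 1
    apply List.map_congr_left
    intro p hp
    have := hwinL p hp
    simp only [Function.comp_apply, window', List.length_take, List.length_drop]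
    omega
  -- ℕ-valued inequalities
  have h2 : ED B' z + k ≤ W := by rw [← hB'len]; exact ED_of_sublist hzB'
  have h3 : ED z B + k ≤ B.length := ED_of_sublist' hzB
  -- first sum
  set S : ℕ := ∑ j : Fin 𝒜.length, (μ j).elim (𝒜.get j).length
      (fun p => ED (𝒜.get j) (window B p.1 p.2)) with hS
  have h1 : ED A B' ≤ S := by
    have hA : A = ((List.finRange 𝒜.length).map 𝒜.get).flatten := by
      rw [List.map_get_finRange, h𝒜]
    have hB'2 : B' = ((List.finRange 𝒜.length).map
        (fun j => (μ j).elim [] (fun p => window' B p.1 p.2))).flatten := by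
      rw [hB', ← flatten_filterMap_map μ (fun p => window' B p.1 p.2) (List.finRange 𝒜.length), hL]
    calc ED A B'
        = ED (((List.finRange 𝒜.length).map 𝒜.get).flatten)
            (((List.finRange 𝒜.length).map
              (fun j => (μ j).elim [] (fun p => window' B p.1 p.2))).flatten) := by
          rw [← hA, ← hB'2]
      _ ≤ ((List.finRange 𝒜.length).map
            (fun j => ED (𝒜.get j) ((μ j).elim [] (fun p => window' B p.1 p.2)))).sum :=
          ED_flatten_le _ _ _
      _ = S := by
          rw [hS, Fin.sum_univ_def]
          congr 1
          apply List.map_congr_left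
          intro j _
          cases h : μ j <;> simp [h, ED_nil_right, window, window']
  -- coverage cardinality = countP
  have hcov : ∀ i : ℕ,
      ((Finset.univ.filter (fun j : Fin 𝒜.length =>
        (Option.elim (μ j) false (fun p => decide (p.1 ≤ i ∧ i < p.1 + p.2))) = true)).card)
      = L.countP (fun p => decide (p.1 ≤ i ∧ i < p.1 + p.2)) := by
    intro i
    rw [hL, List.countP_filterMap, Finset.card_filter, Fin.sum_univ_def,
      countP_eq_sum_map]
    congr 1
    apply List.map_congr_left
    intro j _
    cases h : μ j <;> simp [h]
  -- sum of coverages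
  have hcW : (∑ i ∈ Finset.range B.length,
      L.countP (fun p => decide (p.1 ≤ i ∧ i < p.1 + p.2))) = W := by
    rw [hW]
    exact sum_countP_intervals B.length L hwinL
  -- k as a Finset card
  have hkcard : k = ((Finset.range B.length).filter (fun i => covb L i = true)).card := by
    rw [hk, hz, List.length_map, ← length_filter_range_eq_card (covb L) B.length]
    have hfm : ((List.range B.length).filter (covb L))
        = (B.enum.filter (fun x => covb L x.1)).map Prod.fst := by
      rw [← List.enum_map_fst, List.filter_map]
      congr 1
    rw [hfm, List.length_map]
  -- pointwise absolute-value identity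
  have habs : ∀ i ∈ Finset.range B.length,
      |((Finset.univ.filter (fun j : Fin 𝒜.length =>
          (Option.elim (μ j) false (fun p => decide (p.1 ≤ i ∧ i < p.1 + p.2))) = true)).card : ℤ) - 1|
        = ((Finset.univ.filter (fun j : Fin 𝒜.length =>
          (Option.elim (μ j) false (fun p => decide (p.1 ≤ i ∧ i < p.1 + p.2))) = true)).card : ℤ)
          + 1 - 2 * (if covb L i = true then 1 else 0) := by
    intro i _
    rw [hcov i]
    by_cases hc : covb L i = true
    · have hpos : 0 < L.countP (fun p => decide (p.1 ≤ i ∧ i < p.1 + p.2)) := by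
        rw [List.countP_pos_iff]
        rw [covb, List.any_eq_true] at hc
        exact hc
      have h1' : (1:ℤ) ≤ (L.countP (fun p => decide (p.1 ≤ i ∧ i < p.1 + p.2)) : ℤ) := by
        exact_mod_cast hpos
      rw [if_pos hc, abs_of_nonneg (by omega)]
      omega
    · have hzero : L.countP (fun p => decide (p.1 ≤ i ∧ i < p.1 + p.2)) = 0 := by
        rw [List.countP_eq_zero]
        intro p hp hpp
        exact hc (by rw [covb, List.any_eq_true]; exact ⟨p, hp, hpp⟩)
      rw [if_neg hc, hzero]
      norm_num
  rw [Finset.sum_congr rfl habs]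
  have hsumite : (∑ i ∈ Finset.range B.length, (if covb L i = true then (1:ℤ) else 0)) = (k : ℤ) := by
    rw [Finset.sum_boole, hkcard]
  have hsplit2 : (∑ i ∈ Finset.range B.length,
      (((Finset.univ.filter (fun j : Fin 𝒜.length =>
          (Option.elim (μ j) false (fun p => decide (p.1 ≤ i ∧ i < p.1 + p.2))) = true)).card : ℤ)
        + 1 - 2 * (if covb L i = true then 1 else 0)))
      = (W : ℤ) + (B.length : ℤ) - 2 * (k : ℤ) := by
    rw [Finset.sum_sub_distrib, Finset.sum_add_distrib, ← Finset.mul_sum, hsumite,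
      Finset.sum_const, Finset.card_range]
    have : (∑ i ∈ Finset.range B.length,
        ((Finset.univ.filter (fun j : Fin 𝒜.length =>
          (Option.elim (μ j) false (fun p => decide (p.1 ≤ i ∧ i < p.1 + p.2))) = true)).card : ℤ))
        = (W : ℤ) := by
      rw [← hcW]
      push_cast
      apply Finset.sum_congr rfl
      intro i _
      rw [hcov i]
    rw [this]
    push_cast
    ring
  have hsum1 : (∑ i : Fin 𝒜.length,
      (Option.elim (μ i) ((𝒜.get i).length : ℤ)
        (fun p => (ED (𝒜.get i) (window B p.1 p.2) : ℤ)))) = (S : ℤ) := by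
    rw [hS, Nat.cast_sum]
    apply Finset.sum_congr rfl
    intro j _
    cases h : μ j <;> simp [h]
  rw [hsum1, hsplit2]
  have t1 : ED A B ≤ ED A B' + ED B' B := ED_triangle A B' B
  have t2 : ED B' B ≤ ED B' z + ED z B := ED_triangle B' z B
  omega
end

section
/- Any common subsequence of two permutations X, Y of {1,...,n} that consists of elements forming c blocks contiguous in both X and Y and appearing in the same relative order corresponds to an increasing sequence in the permutation π = Y∘X^{-1} restricted to block representatives; conversely, the heaviest increasing subsequence (with block-length weights) over the c blocks gives the longest common subsequence of X and Y among block-respecting subsequences. -/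
private lemma aux_getElem_congr {α : Type*} (L : List α) {i j : ℕ} (h : i = j)
    (hi : i < L.length) : L[i]'hi = L[j]'(h ▸ hi) := by subst h; rfl

private lemma aux_drop_le {α : Type*} (L : List α) {a b : ℕ} (h : a ≤ b) :
    (L.drop b).Sublist (L.drop a) := by
  have : L.drop b = (L.drop a).drop (b - a) := by
    rw [List.drop_drop]; congr 1; omega
  rw [this]; exact List.drop_sublist _ _

private lemma aux_flatten_sublist {α : Type*} {L₁ L₂ : List (List α)}
    (h : L₁.Sublist L₂) : L₁.flatten.Sublist L₂.flatten := by
  induction h with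
  | slnil => exact List.Sublist.refl _
  | cons l _ ih =>
    rw [List.flatten_cons]
    exact ih.trans (List.sublist_append_right _ _)
  | cons_cons l _ ih =>
    rw [List.flatten_cons, List.flatten_cons]
    exact ih.append_left _

private lemma aux_consume_one {α : Type*} {L : List α} (hN : L.Nodup) {q m : ℕ}
    (hq : q < L.length) {s : List α} (hs : (L[q] :: s).Sublist (L.drop m)) :
    m ≤ q ∧ s.Sublist (L.drop (q + 1)) := by
  rw [List.cons_sublist_iff] at hs
  obtain ⟨r₁, r₂, heq, hmem, hsub⟩ := hs
  obtain ⟨i, hi, hri⟩ := List.mem_iff_getElem.mp hmem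
  have hilt : i < (L.drop m).length := by
    rw [heq, List.length_append]; omega
  have h1 : (L.drop m)[i] = L[q] := by
    have e1 : (L.drop m)[i] = (r₁ ++ r₂)[i]'(heq ▸ hilt) := List.getElem_of_eq heq hilt
    rw [e1, List.getElem_append_left hi, hri]
  have hmi : m + i < L.length := by
    have := hilt; rw [List.length_drop] at this; omega
  have h2 : L[m + i]'hmi = L[q] := List.getElem_drop.symm.trans h1
  have hq' : m + i = q := (hN.getElem_inj_iff).mp h2
  have hr2 : r₂ = L.drop (m + r₁.length) := by
    have := List.drop_left (l₁ := r₁) (l₂ := r₂)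
    rw [← heq] at this
    rw [← this, List.drop_drop]
  refine ⟨by omega, ?_⟩
  refine hsub.trans ?_
  rw [hr2]
  exact aux_drop_le L (by omega)

private lemma aux_consume_seg {α : Type*} {L : List α} (hN : L.Nodup) :
    ∀ (k q m : ℕ) (t : List α), q + (k + 1) ≤ L.length →
      (((L.drop q).take (k + 1)) ++ t).Sublist (L.drop m) →
      m ≤ q ∧ t.Sublist (L.drop (q + (k + 1))) := by
  intro k
  induction k with
  | zero =>
    intro q m t hlen hsub
    have hq : q < L.length := by omega
    have hseg : (L.drop q).take 1 = [L[q]] := by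
      rw [List.drop_eq_getElem_cons hq]; rfl
    rw [hseg] at hsub
    simp only [List.singleton_append] at hsub
    exact aux_consume_one hN hq hsub
  | succ k ih =>
    intro q m t hlen hsub
    have hq : q < L.length := by omega
    have hseg : (L.drop q).take (k + 1 + 1) = L[q] :: ((L.drop (q + 1)).take (k + 1)) := by
      rw [List.drop_eq_getElem_cons hq, List.take_succ_cons]
    rw [hseg, List.cons_append] at hsub
    obtain ⟨hmq, hsub'⟩ := aux_consume_one hN hq hsub
    obtain ⟨_, hres⟩ := ih (q + 1) (q + 1) t (by omega) hsub'
    refine ⟨hmq, ?_⟩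
    have : q + 1 + (k + 1) = q + (k + 1 + 1) := by omega
    rwa [this] at hres

private lemma aux_rel_of_mem {α : Type*} [LinearOrder α] {R : α → α → Prop} {l : List α}
    (h1 : l.Pairwise (· < ·)) (h2 : l.Pairwise R) {a b : α}
    (ha : a ∈ l) (hb : b ∈ l) (hab : a < b) : R a b := by
  obtain ⟨i, hi, rfl⟩ := List.mem_iff_getElem.mp ha
  obtain ⟨j, hj, rfl⟩ := List.mem_iff_getElem.mp hb
  rcases lt_trichotomy i j with h | h | h
  · exact (List.pairwise_iff_getElem.mp h2) i j hi hj h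
  · subst h; exact absurd hab (lt_irrefl _)
  · exact absurd ((List.pairwise_iff_getElem.mp h1) j i hj hi h) (by
      intro hlt; exact absurd (hab.trans hlt) (lt_irrefl _))

/-- Let `X, Y` be permutations of `{1,...,n}` (as the lists
`List.ofFn X`, `List.ofFn Y`), and suppose the positions of `X` are
partitioned into contiguous nonempty blocks `Bl` (so `Bl.flatten = X` as a
list), each of which occurs contiguously in `Y` starting at position `p j`.
Then for every subset `J` of blocks, the concatenation (in `X`-order) of the
blocks of `J` is a common subsequence of `X` and `Y` of length
`Σ_{j∈J} w_j` (where `w_j = |B_j|`) if and only if the starting positions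
`p j` are strictly increasing on `J`; it is always a subsequence of `X` with
that length, so the maximum block-respecting common-subsequence length is the
maximum weight of an increasing subsequence of `(p_j, w_j)_j`. -/
theorem stmt_18 (n : ℕ) (X Y : Equiv.Perm (Fin n))
    (Bl : List (List (Fin n))) (hjoin : Bl.flatten = List.ofFn X)
    (hne : ∀ b ∈ Bl, b ≠ [])
    (p : Fin Bl.length → ℕ)
    (hocc : ∀ j : Fin Bl.length,
      ((List.ofFn Y).drop (p j)).take (Bl.get j).length = Bl.get j) :
    ∀ J : Finset (Fin Bl.length),
      ((((J.sort (· ≤ ·)).map (fun j => Bl.get j)).flatten.Sublist (List.ofFn Y))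
          ↔ StrictMonoOn (fun j => p j) ↑J) ∧
      ((J.sort (· ≤ ·)).map (fun j => Bl.get j)).flatten.Sublist (List.ofFn X) ∧
      ((J.sort (· ≤ ·)).map (fun j => Bl.get j)).flatten.length
        = ∑ j ∈ J, (Bl.get j).length := by
  intro J
  have nodY : (List.ofFn Y).Nodup := List.nodup_ofFn.mpr Y.injective
  have lenY : (List.ofFn Y).length = n := List.length_ofFn
  have hw : ∀ j : Fin Bl.length, 0 < (Bl.get j).length := by
    intro j
    exact List.length_pos_iff.mpr (hne _ (Bl.get_mem j))
  have hpn : ∀ j : Fin Bl.length, p j + (Bl.get j).length ≤ n := by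
    intro j
    have := congrArg List.length (hocc j)
    rw [List.length_take, List.length_drop, lenY] at this
    have hwj := hw j
    omega
  have hget : ∀ (j : Fin Bl.length) (k : ℕ) (hk : k < (Bl.get j).length),
      (Bl.get j)[k]'hk = (List.ofFn Y)[p j + k]'(by have := hpn j; omega) := by
    intro j k hk
    have h := List.getElem_of_eq (hocc j).symm hk
    rw [List.getElem_take, List.getElem_drop] at h
    exact h
  -- blocks are pairwise disjoint
  have hdisj : ∀ a b : Fin Bl.length, a ≠ b →
      List.Disjoint (Bl.get a) (Bl.get b) := by
    have hnodX : Bl.flatten.Nodup := by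
      rw [hjoin]; exact List.nodup_ofFn.mpr X.injective
    have hpair : Bl.Pairwise List.Disjoint := (List.nodup_flatten.mp hnodX).2
    intro a b hab
    rcases lt_or_gt_of_ne hab with h | h
    · exact (List.pairwise_iff_getElem.mp hpair) a b a.isLt b.isLt h
    · exact ((List.pairwise_iff_getElem.mp hpair) b a b.isLt a.isLt h).symm
  -- upgrade: distinct blocks at increasing positions are separated
  have hupg : ∀ a b : Fin Bl.length, a ≠ b → p a < p b →
      p a + (Bl.get a).length ≤ p b := by
    intro a b hab hlt
    by_contra h
    push_neg at h
    have hk : p b - p a < (Bl.get a).length := by omega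
    have e1 : (Bl.get a)[p b - p a]'hk = (List.ofFn Y)[p a + (p b - p a)]'(by
        rw [lenY]; have h1 := hpn b; have h2 := hw b; omega) := hget a _ hk
    have e2 : (Bl.get b)[0]'(hw b) = (List.ofFn Y)[p b + 0]'(by
        rw [lenY]; have h1 := hpn b; have h2 := hw b; omega) := hget b 0 (hw b)
    have heq : (Bl.get a)[p b - p a]'hk = (Bl.get b)[0]'(hw b) := by
      rw [e1, e2]
      exact aux_getElem_congr _ (by omega) _
    exact hdisj a b hab (List.getElem_mem hk) (heq ▸ List.getElem_mem (hw b))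
  -- backward direction: separated blocks give a sublist
  have hbwd : ∀ js : List (Fin Bl.length),
      js.Pairwise (fun a b => p a + (Bl.get a).length ≤ p b) →
      ∀ m : ℕ, (∀ j ∈ js, m ≤ p j) →
      ((js.map (fun j => Bl.get j)).flatten).Sublist ((List.ofFn Y).drop m) := by
    intro js
    induction js with
    | nil => intro _ m _; simp
    | cons j rest ih =>
      intro hpw m hm
      obtain ⟨hhead, htail⟩ := List.pairwise_cons.mp hpw
      rw [List.map_cons, List.flatten_cons]
      have h1 := ih htail (p j + (Bl.get j).length) hhead
      have h2 := h1.append_left (Bl.get j)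
      have h3 : Bl.get j ++ (List.ofFn Y).drop (p j + (Bl.get j).length)
          = (List.ofFn Y).drop (p j) := by
        conv_rhs => rw [← List.take_append_drop (Bl.get j).length
          ((List.ofFn Y).drop (p j))]
        rw [hocc j, List.drop_drop]
      rw [h3] at h2
      exact h2.trans (aux_drop_le _ (hm j (List.mem_cons_self)))
  -- forward direction: a sublist forces separated blocks
  have hfwd : ∀ js : List (Fin Bl.length), ∀ m : ℕ,
      ((js.map (fun j => Bl.get j)).flatten).Sublist ((List.ofFn Y).drop m) →
      (∀ j ∈ js, m ≤ p j) ∧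
        js.Pairwise (fun a b => p a + (Bl.get a).length ≤ p b) := by
    intro js
    induction js with
    | nil => intro m _; exact ⟨by simp, List.Pairwise.nil⟩
    | cons j rest ih =>
      intro m hsub
      rw [List.map_cons, List.flatten_cons] at hsub
      rw [← hocc j] at hsub
      have hwj := hw j
      have hseg : ((List.ofFn Y).drop (p j)).take (Bl.get j).length
          = ((List.ofFn Y).drop (p j)).take (((Bl.get j).length - 1) + 1) := by
        congr 1; omega
      rw [hseg] at hsub
      obtain ⟨hmq, hrest⟩ := aux_consume_seg nodY ((Bl.get j).length - 1) (p j) m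
        ((rest.map (fun j => Bl.get j)).flatten)
        (by have := hpn j; omega) hsub
      have hdrop : p j + ((Bl.get j).length - 1 + 1) = p j + (Bl.get j).length := by omega
      rw [hdrop] at hrest
      obtain ⟨hm', hpw'⟩ := ih (p j + (Bl.get j).length) hrest
      constructor
      · intro j' hj'
        rcases List.mem_cons.mp hj' with rfl | hj'
        · exact hmq
        · have := hm' j' hj'; omega
      · exact List.pairwise_cons.mpr ⟨hm', hpw'⟩
  refine ⟨⟨?_, ?_⟩, ?_, ?_⟩
  · -- sublist of Y → strictly monotone
    intro hsub a ha b hb hab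
    have hsub0 : (((J.sort (· ≤ ·)).map (fun j => Bl.get j)).flatten).Sublist
        ((List.ofFn Y).drop 0) := by simpa using hsub
    obtain ⟨_, hpw⟩ := hfwd _ 0 hsub0
    have hR : p a + (Bl.get a).length ≤ p b :=
      aux_rel_of_mem (Finset.sortedLT_sort J).pairwise hpw
        ((Finset.mem_sort _).mpr ha) ((Finset.mem_sort _).mpr hb) hab
    exact lt_of_lt_of_le (Nat.lt_add_of_pos_right (hw a)) hR
  · -- strictly monotone → sublist of Y
    intro hmono
    have hpwR : (J.sort (· ≤ ·)).Pairwise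
        (fun a b => p a + (Bl.get a).length ≤ p b) := by
      refine (Finset.sortedLT_sort J).pairwise.imp_of_mem ?_
      intro a b ha hb hab
      exact hupg a b (ne_of_lt hab)
        (hmono ((Finset.mem_sort _).mp ha) ((Finset.mem_sort _).mp hb) hab)
    have := hbwd _ hpwR 0 (fun _ _ => Nat.zero_le _)
    simpa using this
  · -- always a sublist of X
    rw [← hjoin]
    refine aux_flatten_sublist ?_
    have hsorted : (J.sort (· ≤ ·)).Pairwise (fun a b : Fin Bl.length => (a : ℕ) < b) := by
      refine (Finset.sortedLT_sort J).pairwise.imp ?_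
      intro a b hab
      exact hab
    exact List.map_getElem_sublist hsorted
  · -- length equals the sum of block lengths
    rw [List.length_flatten, List.map_map]
    rw [Finset.sum, ← Finset.sort_eq J (· ≤ ·), Multiset.map_coe, Multiset.sum_coe]
    rfl
end

section
/- In the heaviest increasing subsequence problem, the set of Pareto-optimal states is an antichain and invariant under the algorithm's updates: if we maintain a set P of pairs (y, w) such that no pair dominates another (y ≤ y' and w ≥ w' implies (y,w) = (y',w')), then after inserting a new pair (y*, w*) with w* = w_prev + weight where w_prev is the largest weight among pairs with y < y*, and deleting all pairs (y', w') with y' > y* and w' ≤ w*, the set P remains an antichain and max weight in P equals the maximum weight of an increasing subsequence of the items processed so far. -/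
/-- `Ach items y w`: some increasing subsequence of the processed items
(pairs `(y-value, weight)`) ends at a `y`-value at most `y` and has total
weight `w`.  (The empty subsequence achieves `(0, 0)`, matching the seed.) -/
def Ach (items : List (ℕ × ℕ)) (y w : ℕ) : Prop :=
  ∃ l : List (ℕ × ℕ), l.Sublist items ∧ l.Chain' (fun a b => a.1 < b.1) ∧
    (l.map Prod.snd).sum = w ∧ ∀ a ∈ l, a.1 ≤ y

/-- `P` is a Pareto frontier (antichain): no pair dominates another. -/
def ParetoAntichain (P : Finset (ℕ × ℕ)) : Prop :=
  ∀ q ∈ P, ∀ q' ∈ P, q.1 ≤ q'.1 → q'.2 ≤ q.2 → q = q'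

/-- The HIS invariant: every achievable (endpoint, weight) is dominated by some
pair in `P`, and every pair in `P` is achievable. -/
def Invariant (P : Finset (ℕ × ℕ)) (items : List (ℕ × ℕ)) : Prop :=
  (∀ y w : ℕ, Ach items y w → ∃ q ∈ P, q.1 ≤ y ∧ w ≤ q.2) ∧
  (∀ q ∈ P, Ach items q.1 q.2)

/-- the set of Pareto-optimal states in the heaviest increasing
subsequence algorithm is an antichain and invariant under the updates: if `P`
is an antichain satisfying the invariant for the items processed so far, and a
new item `(y*, w*)` (with fresh positive `y*`-value and positive weight) is
inserted as `(y*, wprev + w*)` — where `wprev` is the largest weight in `P`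
among pairs with `y < y*` — and all pairs `(y', w')` with `y' > y*` and
`w' ≤ wprev + w*` are deleted, then the resulting set is again an antichain
satisfying the invariant, and its maximum weight is the maximum weight of an
increasing subsequence of the items processed so far. -/
theorem stmt_19 (items : List (ℕ × ℕ)) (P : Finset (ℕ × ℕ))
    (hPinv : Invariant P items) (hPanti : ParetoAntichain P)
    (ystar wstar wprev : ℕ) (hw : 0 < wstar) (hy : 0 < ystar)
    (hfresh : ∀ q ∈ items, q.1 ≠ ystar ∧ 0 < q.1)
    (hprev₁ : ∃ q ∈ P, q.1 < ystar ∧ q.2 = wprev)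
    (hprev₂ : ∀ q ∈ P, q.1 < ystar → q.2 ≤ wprev) :
    ParetoAntichain
      (insert (ystar, wprev + wstar)
        (P.filter fun q => ¬(ystar < q.1 ∧ q.2 ≤ wprev + wstar))) ∧
    Invariant
      (insert (ystar, wprev + wstar)
        (P.filter fun q => ¬(ystar < q.1 ∧ q.2 ≤ wprev + wstar)))
      (items ++ [(ystar, wstar)]) ∧
    IsGreatest {w : ℕ | ∃ y, Ach (items ++ [(ystar, wstar)]) y w}
      ((insert (ystar, wprev + wstar)
        (P.filter fun q => ¬(ystar < q.1 ∧ q.2 ≤ wprev + wstar))).sup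
          Prod.snd) := by
  obtain ⟨hdom, hach⟩ := hPinv
  obtain ⟨q0, hq0P, hq0y, hq0w⟩ := hprev₁
  -- Lemma A: any pair in P with y-value ≤ ystar has weight ≤ wprev
  have hA : ∀ q ∈ P, q.1 ≤ ystar → q.2 ≤ wprev := by
    intro q hq hqy
    obtain ⟨l, hsub, hch, hsum, hle⟩ := hach q hq
    have hle' : ∀ a ∈ l, a.1 ≤ ystar - 1 := by
      intro a ha
      have h1 := (hfresh a (hsub.subset ha)).1
      have h2 := hle a ha
      omega
    obtain ⟨q', hq'P, hq'y, hq'w⟩ := hdom (ystar - 1) q.2 ⟨l, hsub, hch, hsum, hle'⟩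
    have := hprev₂ q' hq'P (by omega)
    omega
  -- Lemma B: no pair in P has y-value exactly ystar
  have hB : ∀ q ∈ P, q.1 ≠ ystar := by
    intro q hq hqe
    have h1 : q.2 ≤ wprev := hA q hq (le_of_eq hqe)
    have h2 := hPanti q0 hq0P q hq (by omega) (by omega)
    rw [h2] at hq0y
    omega
  -- Achievability of the new pair
  have hachx : Ach (items ++ [(ystar, wstar)]) ystar (wprev + wstar) := by
    obtain ⟨l, hsub, hch, hsum, hle⟩ := hach q0 hq0P
    refine ⟨l ++ [(ystar, wstar)], ?_, ?_, ?_, ?_⟩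
    · exact List.Sublist.append hsub (List.Sublist.refl _)
    · unfold List.Chain'
      rw [List.isChain_append]
      refine ⟨hch, List.isChain_singleton _, ?_⟩
      intro a ha b hb
      have ha' : a ∈ l := List.mem_of_mem_getLast? ha
      have hb' : b = (ystar, wstar) := by simpa using hb.symm
      have := hle a ha'
      subst hb'
      show a.1 < ystar
      omega
    · simp [hsum, hq0w]
    · intro a ha
      rcases List.mem_append.mp ha with h | h
      · have := hle a h; omega
      · simp at h; subst h; rfl
  -- Achievability carries over to the extended item list
  have hext : ∀ q ∈ P, Ach (items ++ [(ystar, wstar)]) q.1 q.2 := by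
    intro q hq
    obtain ⟨l, hsub, hch, hsum, hle⟩ := hach q hq
    exact ⟨l, hsub.trans (List.sublist_append_left _ _), hch, hsum, hle⟩
  haveI : IsTrans (ℕ × ℕ) (fun a b => a.1 < b.1) :=
    ⟨fun a b c h1 h2 => lt_trans h1 h2⟩
  -- Domination part of the new invariant
  have hdom' : ∀ y w : ℕ, Ach (items ++ [(ystar, wstar)]) y w →
      ∃ q ∈ insert (ystar, wprev + wstar)
        (P.filter fun q => ¬(ystar < q.1 ∧ q.2 ≤ wprev + wstar)),
        q.1 ≤ y ∧ w ≤ q.2 := by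
    intro y w ⟨l, hsub, hch, hsum, hle⟩
    rw [List.sublist_append_iff] at hsub
    obtain ⟨l₁, l₂, rfl, hs1, hs2⟩ := hsub
    have hl2 : l₂ = [] ∨ l₂ = [(ystar, wstar)] := List.sublist_singleton.mp hs2
    rcases hl2 with rfl | rfl
    · -- the subsequence avoids the new item
      rw [List.append_nil] at hch hsum hle
      obtain ⟨q, hqP, hqy, hqw⟩ := hdom y w ⟨l₁, hs1, hch, hsum, hle⟩
      by_cases hf : ystar < q.1 ∧ q.2 ≤ wprev + wstar
      · exact ⟨(ystar, wprev + wstar), Finset.mem_insert_self _ _,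
          by simp; omega, by simp; omega⟩
      · exact ⟨q, Finset.mem_insert_of_mem (Finset.mem_filter.mpr ⟨hqP, hf⟩),
          hqy, hqw⟩
    · -- the subsequence uses the new item
      unfold List.Chain' at hch
      rw [List.isChain_iff_pairwise, List.pairwise_append] at hch
      obtain ⟨hp1, _, hlt⟩ := hch
      have hlt' : ∀ a ∈ l₁, a.1 ≤ ystar - 1 := by
        intro a ha
        have := hlt a ha (ystar, wstar) (by simp)
        simp only at this
        omega
      obtain ⟨q, hqP, hqy, hqw⟩ := hdom (ystar - 1) (l₁.map Prod.snd).sum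
        ⟨l₁, hs1, List.isChain_iff_pairwise.mpr hp1, rfl, hlt'⟩
      have hq2 : q.2 ≤ wprev := hprev₂ q hqP (by omega)
      have hy' : ystar ≤ y := by
        have := hle (ystar, wstar) (by simp)
        exact this
      have hwle : w ≤ wprev + wstar := by
        simp at hsum
        omega
      exact ⟨(ystar, wprev + wstar), Finset.mem_insert_self _ _, hy', hwle⟩
  -- Antichain
  have hanti : ParetoAntichain (insert (ystar, wprev + wstar)
      (P.filter fun q => ¬(ystar < q.1 ∧ q.2 ≤ wprev + wstar))) := by
    intro q hq q' hq' h1 h2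
    simp only [Finset.mem_insert, Finset.mem_filter] at hq hq'
    rcases hq with rfl | ⟨hqP, hqf⟩ <;> rcases hq' with rfl | ⟨hq'P, hq'f⟩
    · rfl
    · exfalso
      simp only at h1 h2
      have hne := hB q' hq'P
      have : ystar < q'.1 := by omega
      exact hq'f ⟨this, h2⟩
    · exfalso
      simp only at h1 h2
      have hne := hB q hqP
      have hlt : q.1 < ystar := by omega
      have := hA q hqP (le_of_lt hlt)
      omega
    · exact hPanti q hqP q' hq'P h1 h2
  refine ⟨hanti, ⟨hdom', ?_⟩, ?_, ?_⟩
  · intro q hq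
    rcases Finset.mem_insert.mp hq with rfl | hq'
    · exact hachx
    · exact hext q ((Finset.mem_filter.mp hq').1)
  · obtain ⟨q, hqmem, hqs⟩ := Finset.exists_mem_eq_sup
      (insert (ystar, wprev + wstar)
        (P.filter fun q => ¬(ystar < q.1 ∧ q.2 ≤ wprev + wstar)))
      ⟨(ystar, wprev + wstar), Finset.mem_insert_self _ _⟩ Prod.snd
    have hachq : Ach (items ++ [(ystar, wstar)]) q.1 q.2 := by
      rcases Finset.mem_insert.mp hqmem with rfl | hq'
      · exact hachx
      · exact hext q ((Finset.mem_filter.mp hq').1)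
    exact ⟨q.1, hqs ▸ hachq⟩
  · rintro w ⟨y, hw⟩
    obtain ⟨q, hqmem, _, hle⟩ := hdom' y w hw
    exact le_trans hle (Finset.le_sup hqmem)
end
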